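/- arXiv:1410.2446 — 3 statements merged into one kernel-verified Lean document; each statement's English description precedes it below -/
import Mathlib

section
/- For every integer k with 1 ≤ k ≤ l−2 and every even integer a, the following identity holds in R_l: χ(k,a)·χ(k,a+2) = χ(k+1,a)·χ(k−1,a+2) + 1. (All the characters appearing involve at most l−1 factors, so this is the T-system satisfied by the ε-characters of the simple specialised Kirillov–Reshetikhin modules W_ε(k,ε^a) with k < l.) -/
/-!
`Rl l` is the Laurent polynomial ring over `ℤ` in `l` commuting variables
`Y_0, Y_2, …, Y_{2l−2}`, with the index of `Y` read modulo `2l`.  It is realised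
as the group algebra of the free abelian group `ZMod l →₀ ℤ`, the variable with
even index `n` corresponding to the residue `n/2` modulo `l`.
-/

/-- The Laurent polynomial ring `ℤ[Y_0^{±1}, Y_2^{±1}, …, Y_{2l−2}^{±1}]`,
indices read modulo `2l`. -/
abbrev Rl (l : ℕ) : Type := AddMonoidAlgebra ℤ (ZMod l →₀ ℤ)

/-- The monomial `Y_n^e` (for `n` an even integer, read modulo `2l`). -/
noncomputable def Y (l : ℕ) (n e : ℤ) : Rl l :=
  AddMonoidAlgebra.single (Finsupp.single ((n / 2 : ℤ) : ZMod l) e) 1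

/-- The `ε`-character `χ(k,a)` of the Kirillov–Reshetikhin module `W_ε(k,ε^a)`:
`χ(k,a) = Σ_{i=0}^{k} (Π_{t=0}^{k−1−i} Y_{a+2t}) · (Π_{t=k+1−i}^{k} Y_{a+2t}^{−1})`. -/
noncomputable def chi (l : ℕ) (k : ℕ) (a : ℤ) : Rl l :=
  ∑ i ∈ Finset.range (k + 1),
    (∏ t ∈ Finset.range (k - i), Y l (a + 2 * (t : ℤ)) 1) *
      ∏ t ∈ Finset.Icc (k + 1 - i) k, Y l (a + 2 * (t : ℤ)) (-1)

/-- `Z = Y_0Y_2⋯Y_{2l−2} + (Y_0Y_2⋯Y_{2l−2})^{−1}`, the `ε`-character of the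
Frobenius pullback `z₁ = L(𝐘₁)`. -/
noncomputable def Z (l : ℕ) : Rl l :=
  (∏ t ∈ Finset.range l, Y l (2 * (t : ℤ)) 1) +
    ∏ t ∈ Finset.range l, Y l (2 * (t : ℤ)) (-1)

noncomputable def Xm (l : ℕ) (g : ZMod l →₀ ℤ) : Rl l := AddMonoidAlgebra.single g 1

lemma Xm_mul (l : ℕ) (g h : ZMod l →₀ ℤ) : Xm l g * Xm l h = Xm l (g + h) := by
  simp [Xm, AddMonoidAlgebra.single_mul_single]

lemma Xm_zero (l : ℕ) : Xm l 0 = 1 := by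
  simp [Xm, AddMonoidAlgebra.one_def]

lemma Xm_prod (l : ℕ) (s : Finset ℕ) (f : ℕ → ZMod l →₀ ℤ) :
    ∏ t ∈ s, Xm l (f t) = Xm l (∑ t ∈ s, f t) := by
  classical
  induction s using Finset.cons_induction with
  | empty => simp [Xm_zero]
  | cons a s ha ih => rw [Finset.prod_cons, Finset.sum_cons, ih, Xm_mul]

lemma Y_eq (l : ℕ) (m : ℤ) (t : ℕ) (e : ℤ) :
    Y l (2*m + 2*(t:ℤ)) e = Xm l (Finsupp.single ((m + (t:ℤ) : ℤ) : ZMod l) e) := by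
  have : (2*m + 2*(t:ℤ)) / 2 = m + (t:ℤ) := by omega
  rw [Y, Xm, this]

noncomputable def S (l : ℕ) (m : ℤ) (j : ℕ) : ZMod l →₀ ℤ :=
  ∑ t ∈ Finset.range j, Finsupp.single ((m + (t:ℤ) : ℤ) : ZMod l) 1

lemma Icc_sum (l : ℕ) (m : ℤ) (j k : ℕ) (h : j ≤ k + 1) :
    ∑ t ∈ Finset.Icc j k, Finsupp.single ((m + (t:ℤ) : ℤ) : ZMod l) (-1 : ℤ)
      = S l m j - S l m (k+1) := by
  have h1 : ∀ (c : ZMod l), Finsupp.single c (-1 : ℤ) = - Finsupp.single c 1 := by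
    intro c; simp
  simp only [h1, Finset.sum_neg_distrib]
  rw [← Finset.Ico_add_one_right_eq_Icc, Finset.sum_Ico_eq_sub _ h]
  simp only [S]
  abel

lemma chi_eq (l : ℕ) (m : ℤ) (k : ℕ) :
    chi l k (2*m) = ∑ i ∈ Finset.range (k+1),
      Xm l (S l m (k-i) + (S l m (k+1-i) - S l m (k+1))) := by
  unfold chi
  refine Finset.sum_congr rfl fun i hi => ?_
  have hi' : i ≤ k := by simpa [Nat.lt_succ_iff] using hi
  have h1 : ∏ t ∈ Finset.range (k-i), Y l (2*m + 2*(t:ℤ)) 1 = Xm l (S l m (k-i)) := by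
    simp only [Y_eq]; rw [Xm_prod]; rfl
  have h2 : ∏ t ∈ Finset.Icc (k+1-i) k, Y l (2*m + 2*(t:ℤ)) (-1)
      = Xm l (S l m (k+1-i) - S l m (k+1)) := by
    simp only [Y_eq]; rw [Xm_prod, Icc_sum l m _ k (by omega)]
  rw [h1, h2, Xm_mul]
lemma S_succ' (l : ℕ) (m : ℤ) (j : ℕ) :
    S l m (j+1) = S l (m+1) j + Finsupp.single ((m : ZMod l)) 1 := by
  unfold S
  rw [Finset.sum_range_succ']
  congr 1
  · apply Finset.sum_congr rfl
    intro t _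
    congr 2
    push_cast
    ring
  · congr 1
    norm_num

lemma S_succ (l : ℕ) (m : ℤ) (j : ℕ) :
    S l (m+1) j = S l m (j+1) - Finsupp.single ((m : ZMod l)) 1 := by
  rw [S_succ']; abel

lemma S_one (l : ℕ) (m : ℤ) : S l m 1 = Finsupp.single ((m : ZMod l)) 1 := by
  simp [S]

lemma key {M : Type*} [AddCommMonoid M] (k : ℕ) (F : ℕ → ℕ → M)
    (hsym : ∀ j < k, F k (j+1) = F j (k+1)) :
    ∑ i ∈ Finset.range (k+1), ∑ j ∈ Finset.range (k+1), F i j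
      = (∑ i ∈ Finset.range (k+2), ∑ j ∈ Finset.range k, F j i) + F k 0 := by
  have hR : ∑ i ∈ Finset.range (k+2), ∑ j ∈ Finset.range k, F j i
      = (∑ j ∈ Finset.range k, ∑ i ∈ Finset.range (k+1), F j i)
        + ∑ j ∈ Finset.range k, F j (k+1) := by
    rw [Finset.sum_comm]
    rw [Finset.sum_congr rfl
      (fun j _ => Finset.sum_range_succ (fun i => F j i) (k+1))]
    rw [Finset.sum_add_distrib]
  have hL : ∑ i ∈ Finset.range (k+1), ∑ j ∈ Finset.range (k+1), F i j
      = (∑ i ∈ Finset.range k, ∑ j ∈ Finset.range (k+1), F i j)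
        + ∑ j ∈ Finset.range (k+1), F k j := Finset.sum_range_succ _ _
  have hl2 : ∑ j ∈ Finset.range (k+1), F k j
      = (∑ j ∈ Finset.range k, F k (j+1)) + F k 0 := Finset.sum_range_succ' _ _
  rw [hL, hR, hl2,
    Finset.sum_congr rfl (fun j hj => hsym j (Finset.mem_range.mp hj))]
  abel
noncomputable def Fm (l : ℕ) (m : ℤ) (k i j : ℕ) : Rl l :=
  Xm l (S l m (k-i) + S l m (k+1-i) + S l m (k+1-j) + S l m (k+2-j)
    - S l m (k+1) - S l m (k+2) - Finsupp.single ((m : ZMod l)) 1)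

lemma Fm_sym (l : ℕ) (m : ℤ) (k : ℕ) : ∀ j < k, Fm l m k k (j+1) = Fm l m k j (k+1) := by
  intro j hj
  unfold Fm
  congr 1
  have e1 : k - k = 0 := by omega
  have e2 : k+1-k = 1 := by omega
  have e3 : k+1-(j+1) = k-j := by omega
  have e4 : k+2-(j+1) = k+1-j := by omega
  have e5 : k+1-(k+1) = 0 := by omega
  have e6 : k+2-(k+1) = 1 := by omega
  rw [e1, e2, e3, e4, e5, e6]
  abel

lemma S_zero (l : ℕ) (m : ℤ) : S l m 0 = 0 := by simp [S]

lemma Fm_k0 (l : ℕ) (m : ℤ) (k : ℕ) : Fm l m k k 0 = 1 := by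
  unfold Fm
  have e1 : k - k = 0 := by omega
  have e2 : k+1-k = 1 := by omega
  have e3 : k+1-0 = k+1 := by omega
  have e4 : k+2-0 = k+2 := by omega
  rw [e1, e2, e3, e4, S_zero, S_one]
  rw [show (0 : ZMod l →₀ ℤ) + Finsupp.single ((m : ZMod l)) 1 + S l m (k+1) + S l m (k+2)
      - S l m (k+1) - S l m (k+2) - Finsupp.single ((m : ZMod l)) 1 = 0 by abel]
  exact Xm_zero l

lemma lhs_eq (l : ℕ) (m : ℤ) (k : ℕ) :
    chi l k (2*m) * chi l k (2*m+2)
      = ∑ i ∈ Finset.range (k+1), ∑ j ∈ Finset.range (k+1), Fm l m k i j := by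
  rw [show (2*m+2 : ℤ) = 2*(m+1) by ring, chi_eq l m k, chi_eq l (m+1) k,
    Finset.sum_mul_sum]
  refine Finset.sum_congr rfl fun i hi => Finset.sum_congr rfl fun j hj => ?_
  have hj' : j ≤ k := by simpa [Nat.lt_succ_iff] using hj
  rw [Xm_mul]
  unfold Fm
  congr 1
  rw [S_succ, S_succ, S_succ]
  have e1 : k - j + 1 = k+1-j := by omega
  have e2 : k+1-j+1 = k+2-j := by omega
  have e3 : k+1+1 = k+2 := by omega
  rw [e1, e2, e3]
  abel

lemma rhs_eq (l : ℕ) (m : ℤ) (k : ℕ) (hk1 : 1 ≤ k) :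
    chi l (k+1) (2*m) * chi l (k-1) (2*m+2)
      = ∑ i ∈ Finset.range (k+2), ∑ j ∈ Finset.range k, Fm l m k j i := by
  rw [show (2*m+2 : ℤ) = 2*(m+1) by ring, chi_eq l m (k+1), chi_eq l (m+1) (k-1),
    Finset.sum_mul_sum]
  rw [show k+1+1 = k+2 by omega, show k-1+1 = k by omega]
  refine Finset.sum_congr rfl fun i hi => Finset.sum_congr rfl fun j hj => ?_
  have hi' : i ≤ k+1 := by simpa [Nat.lt_succ_iff] using hi
  have hj' : j < k := Finset.mem_range.mp hj
  rw [Xm_mul]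
  unfold Fm
  congr 1
  rw [S_succ, S_succ, S_succ]
  rw [show k-1-j+1 = k-j by omega, show k-j+1 = k+1-j by omega]
  abel

/-- The T-system for the `ε`-characters of the simple specialised
Kirillov–Reshetikhin modules: for `1 ≤ k ≤ l−2` and `a` even,
`χ(k,a)·χ(k,a+2) = χ(k+1,a)·χ(k−1,a+2) + 1`. -/
theorem tsystem_eps (l : ℕ) (hl : 2 ≤ l) (k : ℕ) (hk1 : 1 ≤ k) (hk2 : k ≤ l - 2)
    (a : ℤ) (ha : Even a) :
    chi l k a * chi l k (a + 2) = chi l (k + 1) a * chi l (k - 1) (a + 2) + 1 := by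
  obtain ⟨m, hm⟩ := ha
  have hm2 : a = 2*m := by omega
  subst hm2
  rw [lhs_eq l m k, rhs_eq l m k hk1, key k (Fm l m k) (Fm_sym l m k), Fm_k0]
end

section
/- For every even integer a, the following identity holds in R_l: χ(l,a) = Y_a·Y_{a+2}⋯Y_{a+2l−2} + (Y_a·Y_{a+2}⋯Y_{a+2l−2})^{−1} + χ(l−2,a+2). (This is the root-of-unity phenomenon: the specialisation at ε of the generic Kirillov–Reshetikhin character with l factors decomposes as the character of the Frobenius pullback z₁ plus a smaller Kirillov–Reshetikhin character.) -/
lemma Y_period (l : ℕ) (a e : ℤ) : Y l (a + 2 * l) e = Y l a e := by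
  unfold Y
  congr 2
  rw [Int.add_mul_ediv_left a (l : ℤ) two_ne_zero]
  push_cast
  simp

lemma Y_cancel (l : ℕ) (n : ℤ) : Y l n 1 * Y l n (-1) = 1 := by
  unfold Y
  rw [AddMonoidAlgebra.single_mul_single, ← Finsupp.single_add]
  norm_num
  rfl

lemma prodIcc {M : Type*} [CommMonoid M] (f : ℕ → M) (m n : ℕ) :
    ∏ t ∈ Finset.Icc m n, f t = ∏ t ∈ Finset.range (n + 1 - m), f (m + t) := by
  rw [← Finset.Ico_add_one_right_eq_Icc, Finset.prod_Ico_eq_prod_range]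

lemma last_term (m : ℕ) (a : ℤ) :
    ∏ t ∈ Finset.Icc 1 (m + 2), Y (m+2) (a + 2 * (t : ℤ)) (-1)
      = ∏ t ∈ Finset.range (m + 2), Y (m+2) (a + 2 * (t : ℤ)) (-1) := by
  rw [prodIcc]
  simp only [Nat.add_sub_cancel]
  rw [Finset.prod_range_succ]
  conv_rhs => rw [Finset.prod_range_succ']
  congr 1
  · apply Finset.prod_congr rfl; intro t _; congr 1; push_cast; ring
  · have h2 : (((1 + (m + 1) : ℕ)) : ℤ) = ((m + 2 : ℕ) : ℤ) := by push_cast; ring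
    rw [h2, Y_period]
    norm_num

lemma mid_term (m j : ℕ) (hj : j ≤ m) (a : ℤ) :
    (∏ t ∈ Finset.range (m + 2 - (j+1)), Y (m+2) (a + 2 * (t : ℤ)) 1) *
      ∏ t ∈ Finset.Icc (m + 2 + 1 - (j+1)) (m+2), Y (m+2) (a + 2 * (t : ℤ)) (-1)
    = (∏ t ∈ Finset.range (m - j), Y (m+2) (a + 2 + 2 * (t : ℤ)) 1) *
        ∏ t ∈ Finset.Icc (m + 1 - j) m, Y (m+2) (a + 2 + 2 * (t : ℤ)) (-1) := by
  have h1 : m + 2 - (j+1) = (m - j) + 1 := by omega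
  have h2 : m + 2 + 1 - (j+1) = (m - j) + 2 := by omega
  have P1 : ∏ t ∈ Finset.range ((m - j) + 1), Y (m+2) (a + 2 * (t : ℤ)) 1
      = Y (m+2) a 1 * ∏ t ∈ Finset.range (m - j), Y (m+2) (a + 2 + 2 * (t : ℤ)) 1 := by
    rw [Finset.prod_range_succ', mul_comm]
    congr 1
    · norm_num
    · apply Finset.prod_congr rfl; intro t _; congr 1; push_cast; ring
  have P2 : ∏ t ∈ Finset.Icc ((m - j) + 2) (m+2), Y (m+2) (a + 2 * (t : ℤ)) (-1)
      = (∏ t ∈ Finset.Icc (m + 1 - j) m, Y (m+2) (a + 2 + 2 * (t : ℤ)) (-1)) *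
          Y (m+2) a (-1) := by
    rw [prodIcc, prodIcc]
    have e1 : m + 2 + 1 - (m - j + 2) = j + 1 := by omega
    have e2 : m + 1 - (m + 1 - j) = j := by omega
    rw [e1, e2, Finset.prod_range_succ]
    congr 1
    · apply Finset.prod_congr rfl; intro t _; congr 1
      have : m + 1 - j + t = m - j + 1 + t := by omega
      rw [this]; push_cast; ring
    · have : m - j + 2 + j = m + 2 := by omega
      rw [this]
      exact Y_period (m+2) a (-1)
  rw [h1, h2, P1, P2]
  linear_combination (∏ t ∈ Finset.range (m - j), Y (m+2) (a + 2 + 2 * (t : ℤ)) 1) *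
      (∏ t ∈ Finset.Icc (m + 1 - j) m, Y (m+2) (a + 2 + 2 * (t : ℤ)) (-1)) *
      Y_cancel (m+2) a

/-- The root-of-unity phenomenon: for every even integer `a`,
`χ(l,a) = Y_a Y_{a+2}⋯Y_{a+2l−2} + (Y_a Y_{a+2}⋯Y_{a+2l−2})^{−1} + χ(l−2,a+2)`. -/
theorem chi_l_decomposition (l : ℕ) (hl : 2 ≤ l) (a : ℤ) (ha : Even a) :
    chi l l a =
      (∏ t ∈ Finset.range l, Y l (a + 2 * (t : ℤ)) 1) +
        (∏ t ∈ Finset.range l, Y l (a + 2 * (t : ℤ)) (-1)) +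
        chi l (l - 2) (a + 2) := by
  obtain ⟨m, rfl⟩ : ∃ m, l = m + 2 := ⟨l - 2, by omega⟩
  have hsub : m + 2 - 2 = m := by omega
  rw [hsub]
  unfold chi
  rw [show m + 2 + 1 = (m + 2) + 1 from rfl, Finset.sum_range_succ']
  rw [show m + 2 = (m + 1) + 1 from rfl, Finset.sum_range_succ]
  have hT0 : (∏ t ∈ Finset.range (m + 2 - 0), Y (m+2) (a + 2 * (t : ℤ)) 1) *
      ∏ t ∈ Finset.Icc (m + 2 + 1 - 0) (m+2), Y (m+2) (a + 2 * (t : ℤ)) (-1)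
      = ∏ t ∈ Finset.range (m + 2), Y (m+2) (a + 2 * (t : ℤ)) 1 := by
    rw [Finset.Icc_eq_empty (by omega), Finset.prod_empty, mul_one, Nat.sub_zero]
  have hTl : (∏ t ∈ Finset.range (m + 2 - (m + 1 + 1)), Y (m+2) (a + 2 * (t : ℤ)) 1) *
      ∏ t ∈ Finset.Icc (m + 2 + 1 - (m + 1 + 1)) (m+2), Y (m+2) (a + 2 * (t : ℤ)) (-1)
      = ∏ t ∈ Finset.range (m + 2), Y (m+2) (a + 2 * (t : ℤ)) (-1) := by
    have e1 : m + 2 - (m + 1 + 1) = 0 := by omega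
    have e2 : m + 2 + 1 - (m + 1 + 1) = 1 := by omega
    rw [e1, e2, Finset.range_zero, Finset.prod_empty, one_mul, last_term]
  rw [hT0, hTl]
  rw [Finset.sum_congr rfl (fun j hj => mid_term m j (by
      simpa using Nat.lt_succ_iff.mp (Finset.mem_range.mp hj)) a)]
  ring
end

section
/- The l fundamental characters χ(1,0), χ(1,2), …, χ(1,2l−2) ∈ R_l, i.e. the elements Y_{2m} + Y_{2m+2}^{−1} for m = 0,1,…,l−1 (indices modulo 2l), are algebraically independent over ℤ: the ℤ-algebra homomorphism from the polynomial ring ℤ[x_0,…,x_{l−1}] to R_l sending x_m to Y_{2m} + Y_{2m+2}^{−1} is injective. (This is the character-level form of the isomorphism K₀(𝒞_{ε^ℤ}) ≅ ℤ[[L(Y_{2k})], 0 ≤ k ≤ l−1] for U_ε^res(L sl₂).) -/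
namespace FundChar


variable {l : ℕ}

/-- The total weight of an exponent vector. -/
noncomputable def W : (ZMod l →₀ ℤ) →+ ℤ :=
  AddMonoidHom.mk' (fun g => g.sum fun _ v => v)
    (fun g h => Finsupp.sum_add_index' (fun _ => rfl) (fun _ _ _ => rfl))

@[simp] lemma W_single (c : ZMod l) (v : ℤ) : W (Finsupp.single c v) = v := by
  show (Finsupp.single c v).sum (fun _ v => v) = v
  exact Finsupp.sum_single_index rfl

/-- `x` has unique top term `single g 1`, with `W g = n` and all other terms
of weight `< n`. -/
def IsTop (n : ℤ) (g : ZMod l →₀ ℤ) (x : Rl l) : Prop :=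
  W g = n ∧ ∀ h ∈ (x - AddMonoidAlgebra.single g 1).coeff.support, W h < n

lemma IsTop.one : IsTop (l := l) 0 0 1 := by
  constructor
  · simp
  · intro h hh
    rw [AddMonoidAlgebra.one_def, sub_self] at hh
    simp at hh

lemma IsTop.mul {n n' : ℤ} {g g' : ZMod l →₀ ℤ} {x x' : Rl l}
    (hx : IsTop n g x) (hx' : IsTop n' g' x') :
    IsTop (n + n') (g + g') (x * x') := by
  classical
  obtain ⟨hg, hr⟩ := hx
  obtain ⟨hg', hr'⟩ := hx'
  refine ⟨by rw [map_add, hg, hg'], ?_⟩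
  set r : Rl l := x - AddMonoidAlgebra.single g 1 with hrdef
  set r' : Rl l := x' - AddMonoidAlgebra.single g' 1 with hrdef'
  have hs : (AddMonoidAlgebra.single g 1 : Rl l) * AddMonoidAlgebra.single g' 1
      = AddMonoidAlgebra.single (g + g') 1 := by
    rw [AddMonoidAlgebra.single_mul_single, one_mul]
  have hdec : x * x' - AddMonoidAlgebra.single (g + g') 1
      = AddMonoidAlgebra.single g 1 * r' + r * AddMonoidAlgebra.single g' 1 + r * r' := by
    have hx : x = AddMonoidAlgebra.single g 1 + r := by rw [hrdef]; ring
    have hx' : x' = AddMonoidAlgebra.single g' 1 + r' := by rw [hrdef']; ring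
    rw [hx, hx']
    linear_combination hs
  intro h hh
  rw [hdec, AddMonoidAlgebra.coeff_add] at hh
  have hh' := Finsupp.support_add hh
  rw [Finset.mem_union] at hh'
  rcases hh' with hh' | hh'
  · rw [AddMonoidAlgebra.coeff_add] at hh'
    have := Finsupp.support_add hh'
    rw [Finset.mem_union] at this
    rcases this with hmem | hmem
    · obtain ⟨a, ha, b, hb, rfl⟩ := Finset.mem_add.mp (AddMonoidAlgebra.support_coeff_mul_subset _ _ hmem)
      have ha' : a = g := Finset.mem_singleton.mp (Finsupp.support_single_subset ha)
      have := hr' b hb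
      rw [map_add, ha', hg]
      omega
    · obtain ⟨a, ha, b, hb, rfl⟩ := Finset.mem_add.mp (AddMonoidAlgebra.support_coeff_mul_subset _ _ hmem)
      have hb' : b = g' := Finset.mem_singleton.mp (Finsupp.support_single_subset hb)
      have := hr a ha
      rw [map_add, hb', hg']
      omega
  · obtain ⟨a, ha, b, hb, rfl⟩ := Finset.mem_add.mp (AddMonoidAlgebra.support_coeff_mul_subset _ _ hh')
    have := hr a ha
    have := hr' b hb
    rw [map_add]
    omega

lemma IsTop.pow {n : ℤ} {g : ZMod l →₀ ℤ} {x : Rl l} (hx : IsTop n g x) :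
    ∀ k : ℕ, IsTop ((k : ℤ) * n) (k • g) (x ^ k)
  | 0 => by simpa using IsTop.one
  | k + 1 => by
      have h2 := (IsTop.pow hx k).mul hx
      rw [pow_succ, show ((k + 1 : ℕ) : ℤ) * n = (k : ℤ) * n + n by push_cast; ring,
        succ_nsmul g k]
      exact h2

lemma IsTop.prod {ι : Type*} (s : Finset ι) (n : ι → ℤ) (g : ι → (ZMod l →₀ ℤ))
    (x : ι → Rl l) (h : ∀ i ∈ s, IsTop (n i) (g i) (x i)) :
    IsTop (∑ i ∈ s, n i) (∑ i ∈ s, g i) (∏ i ∈ s, x i) := by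
  classical
  induction s using Finset.induction_on with
  | empty => simpa using IsTop.one
  | @insert a s' hi ih =>
      rw [Finset.sum_insert hi, Finset.sum_insert hi, Finset.prod_insert hi]
      exact (h a (Finset.mem_insert_self _ _)).mul
        (ih fun i hi' => h i (Finset.mem_insert_of_mem hi'))


/-- The injection `Fin l → ZMod l`. -/
def em (m : Fin l) : ZMod l := ((m : ℕ) : ZMod l)

lemma em_injective [NeZero l] : Function.Injective (em (l := l)) := by
  intro a b hab
  have h2 : ((a : ℕ) : ZMod l).val = ((b : ℕ) : ZMod l).val := congrArg ZMod.val hab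
  rw [ZMod.val_cast_of_lt a.2, ZMod.val_cast_of_lt b.2] at h2
  exact Fin.ext h2

/-- The exponent vector attached to a monomial. -/
noncomputable def gOf (β : Fin l →₀ ℕ) : ZMod l →₀ ℤ :=
  ∑ i ∈ β.support, (β i) • (Finsupp.single (em i) (1 : ℤ))

lemma gOf_eq (β : Fin l →₀ ℕ) :
    gOf β = Finsupp.mapDomain em (Finsupp.mapRange (Nat.cast) Nat.cast_zero β) := by
  rw [Finsupp.mapDomain, Finsupp.sum_mapRange_index (by simp)]
  rw [gOf, Finsupp.sum]
  refine Finset.sum_congr rfl fun i _ => ?_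
  rw [Finsupp.smul_single, nsmul_eq_mul, mul_one]

lemma gOf_injective [NeZero l] : Function.Injective (gOf (l := l)) := by
  intro a b hab
  rw [gOf_eq, gOf_eq] at hab
  have h1 := Finsupp.mapDomain_injective (em_injective (l := l)) hab
  exact Finsupp.mapRange_injective _ _ Nat.cast_injective h1

lemma W_gOf (β : Fin l →₀ ℕ) : W (gOf β) = ∑ i ∈ β.support, (β i : ℤ) := by
  rw [gOf, map_sum]
  exact Finset.sum_congr rfl fun i _ => by
    rw [map_nsmul, W_single, nsmul_eq_mul, mul_one]

lemma isTop_f [NeZero l] (m : Fin l) :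
    IsTop 1 (Finsupp.single (em m) 1) (Y l (2 * (m : ℤ)) 1 + Y l (2 * (m : ℤ) + 2) (-1)) := by
  have hdiv : (2 * (m : ℤ)) / 2 = (m : ℤ) := Int.mul_ediv_cancel_left _ two_ne_zero
  have hY : Y l (2 * (m : ℤ)) 1
      = AddMonoidAlgebra.single (Finsupp.single (em m) (1 : ℤ)) 1 := by
    rw [Y, hdiv]
    norm_cast
  constructor
  · simp
  · intro h hh
    rw [hY, add_sub_cancel_left] at hh
    simp only [Y, AddMonoidAlgebra.coeff_single] at hh
    have h3 := Finsupp.support_single_subset hh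
    rw [Finset.mem_singleton] at h3
    rw [h3, W_single]
    norm_num


end FundChar

/-- The `l` fundamental characters `Y_{2m} + Y_{2m+2}^{−1}` (`m = 0,…,l−1`) are
algebraically independent over `ℤ`: the `ℤ`-algebra homomorphism from
`ℤ[x_0,…,x_{l−1}]` to `Rl l` sending `x_m` to `Y_{2m} + Y_{2m+2}^{−1}` is injective. -/
theorem fundamental_characters_algebraically_independent (l : ℕ) (hl : 2 ≤ l) :
    Function.Injective
      (MvPolynomial.aeval
        (fun m : Fin l => Y l (2 * (m : ℤ)) 1 + Y l (2 * (m : ℤ) + 2) (-1)) :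
        MvPolynomial (Fin l) ℤ →ₐ[ℤ] Rl l) := by
  classical
  have : NeZero l := ⟨by omega⟩
  set f : Fin l → Rl l := fun m => Y l (2 * (m : ℤ)) 1 + Y l (2 * (m : ℤ) + 2) (-1) with hf
  rw [injective_iff_map_eq_zero]
  intro p hp
  by_contra hp0
  have hs : p.support.Nonempty :=
    Finset.nonempty_iff_ne_empty.mpr (fun he => hp0 (MvPolynomial.support_eq_empty.mp he))
  obtain ⟨α, hα, hmax⟩ := p.support.exists_max_image (fun β => β.sum fun _ k => k) hs
  have hcast : ∀ γ : Fin l →₀ ℕ,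
      ∑ i ∈ γ.support, ((γ i : ℤ) * 1) = ((γ.sum fun _ k => k : ℕ) : ℤ) := by
    intro γ
    rw [Finsupp.sum]
    push_cast
    simp
  have key : ∀ β : Fin l →₀ ℕ, FundChar.IsTop ((β.sum fun _ k => k : ℕ) : ℤ)
      (FundChar.gOf β) (β.prod fun m k => f m ^ k) := by
    intro β
    have h1 := FundChar.IsTop.prod β.support (fun i => (β i : ℤ) * 1)
      (fun i => (β i) • Finsupp.single (FundChar.em i) 1)
      (fun i => f i ^ β i)
      (fun i _ => (FundChar.isTop_f i).pow (β i))
    rw [hcast β] at h1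
    simpa [FundChar.gOf, Finsupp.prod] using h1
  have expand : (MvPolynomial.aeval f p : Rl l)
      = ∑ β ∈ p.support, MvPolynomial.coeff β p • (β.prod fun m k => f m ^ k) := by
    conv_lhs => rw [MvPolynomial.as_sum p]
    rw [map_sum]
    refine Finset.sum_congr rfl fun β _ => ?_
    rw [MvPolynomial.aeval_monomial, ← Algebra.smul_def]
  have happ : (∑ β ∈ p.support,
      MvPolynomial.coeff β p • (β.prod fun m k => f m ^ k)).coeff (FundChar.gOf α) = 0 := by
    rw [← expand, hp]
    rfl
  have hFval : ∀ β ∈ p.support,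
      (β.prod fun m k => f m ^ k).coeff (FundChar.gOf α) = if β = α then 1 else 0 := by
    intro β hβ
    obtain ⟨hWg, hrest⟩ := key β
    have hdecomp : (β.prod fun m k => f m ^ k)
        = AddMonoidAlgebra.single (FundChar.gOf β) 1
          + ((β.prod fun m k => f m ^ k) - AddMonoidAlgebra.single (FundChar.gOf β) 1) := by
      ring
    rw [hdecomp, AddMonoidAlgebra.coeff_add, Finsupp.add_apply]
    have hr0 : (((β.prod fun m k => f m ^ k)
        - AddMonoidAlgebra.single (FundChar.gOf β) 1 : Rl l)).coeff (FundChar.gOf α) = 0 := by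
      by_contra h0
      have hmem := Finsupp.mem_support_iff.mpr h0
      have hlt := hrest _ hmem
      have hWα : FundChar.W (FundChar.gOf α) = ((α.sum fun _ k => k : ℕ) : ℤ) := by
        rw [FundChar.W_gOf, Finsupp.sum, Nat.cast_sum]
      rw [hWα] at hlt
      have h1 : (β.sum fun _ k => k) ≤ (α.sum fun _ k => k) := hmax β hβ
      omega
    rw [hr0, add_zero, AddMonoidAlgebra.coeff_single, Finsupp.single_apply]
    by_cases he : β = α
    · simp [he]
    · have hne : FundChar.gOf β ≠ FundChar.gOf α :=
        fun hc => he (FundChar.gOf_injective hc)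
      simp [he, hne]
  rw [AddMonoidAlgebra.coeff_sum, Finset.sum_apply'] at happ
  rw [Finset.sum_congr rfl (fun β hβ => by
    rw [AddMonoidAlgebra.coeff_smul, Finsupp.smul_apply, hFval β hβ])] at happ
  simp only [smul_eq_mul, mul_ite, mul_one, mul_zero] at happ
  rw [Finset.sum_ite_eq' p.support α (fun β => MvPolynomial.coeff β p)] at happ
  rw [if_pos hα] at happ
  exact MvPolynomial.mem_support_iff.mp hα happ
end
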